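/- Let α, β ∈ (0,1) be irrational numbers and n ∈ ℕ such that their n-th continued fraction convergents coincide: q_n^α = q_n^β =: q_n and p_n^α = p_n^β. Then for every k ∈ {1,...,q_n−1} there exists c_k ∈ {0,...,q_n−1} such that both kα mod 1 and kβ mod 1 lie in the open interval (c_k/q_n, (c_k+1)/q_n). -/

import Mathlib

open GenContFract

lemma cf_not_term (v : ℝ) (hv : Irrational v) (m : ℕ) :
    ¬(GenContFract.of v).TerminatedAt m := by
  intro h
  obtain ⟨q, rfl⟩ := (GenContFract.terminates_iff_rat v).1 ⟨m, h⟩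
  exact hv ⟨q, rfl⟩

lemma cf_contsAux_int (v : ℝ) : ∀ m : ℕ, ∃ a b : ℤ,
    ((GenContFract.of v).contsAux m).a = (a : ℝ) ∧
    ((GenContFract.of v).contsAux m).b = (b : ℝ) := by
  intro m
  induction m using Nat.strong_induction_on with
  | _ m ih =>
    match m with
    | 0 => exact ⟨1, 0, by simp [GenContFract.contsAux], by simp [GenContFract.contsAux]⟩
    | 1 => exact ⟨⌊v⌋, 1, by simp [GenContFract.contsAux, of_h_eq_floor],
        by simp [GenContFract.contsAux]⟩
    | (m+2) =>
      obtain ⟨a1, b1, ha1, hb1⟩ := ih (m+1) (by omega)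
      obtain ⟨a0, b0, ha0, hb0⟩ := ih m (by omega)
      cases hs : (GenContFract.of v).s.get? m with
      | none =>
        rw [contsAux_stable_step_of_terminated hs]
        exact ⟨a1, b1, ha1, hb1⟩
      | some gp =>
        have hgpa : gp.a = 1 := of_partNum_eq_one (partNum_eq_s_a hs)
        obtain ⟨z, hz⟩ := exists_int_eq_of_partDen (partDen_eq_s_b hs)
        rw [contsAux_recurrence hs rfl rfl]
        exact ⟨z * a1 + a0, z * b1 + b0,
          by simp [GenContFract.nextConts, GenContFract.nextNum, hgpa, hz, ha1, ha0],
          by simp [GenContFract.nextConts, GenContFract.nextDen, hgpa, hz, hb1, hb0]⟩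

set_option maxHeartbeats 1000000 in
lemma cf_key (v : ℝ) (hv : Irrational v) (n qn : ℕ) (pn : ℤ)
    (hq : ((qn : ℝ)) = (GenContFract.of v).dens n)
    (hp : ((pn : ℝ)) = (GenContFract.of v).nums n)
    (k : ℕ) (hk1 : 1 ≤ k) (hk2 : k < qn) :
    1 ≤ (k * pn) % qn ∧ (k * pn) % qn < qn ∧
    (Even n → Int.fract ((k : ℝ) * v) ∈
      Set.Ioo (((k * pn % qn : ℤ) : ℝ) / qn) ((((k * pn % qn : ℤ) : ℝ) + 1) / qn)) ∧
    (¬Even n → Int.fract ((k : ℝ) * v) ∈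
      Set.Ioo ((((k * pn % qn : ℤ) : ℝ) - 1) / qn) (((k * pn % qn : ℤ) : ℝ) / qn)) := by
  have hqn2 : 2 ≤ qn := by omega
  have hQ : (0:ℝ) < qn := by exact_mod_cast (by omega : 0 < qn)
  -- integrality of next numerator/denominator
  obtain ⟨a', b', ha', hb'⟩ := cf_contsAux_int v (n + 2)
  have hnum1 : (GenContFract.of v).nums (n+1) = (a' : ℝ) := by
    rw [num_eq_conts_a, nth_cont_eq_succ_nth_contAux]; exact ha'
  have hden1 : (GenContFract.of v).dens (n+1) = (b' : ℝ) := by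
    rw [den_eq_conts_b, nth_cont_eq_succ_nth_contAux]; exact hb'
  -- determinant / coprimality
  have hdet := SimpContFract.determinant (s := SimpContFract.of v) (cf_not_term v hv n)
  rw [show ((SimpContFract.of v : GenContFract ℝ)) = GenContFract.of v from rfl] at hdet
  rw [← hq, ← hp, hnum1, hden1] at hdet
  have hdetZ : pn * b' - qn * a' = (-1)^(n+1) := by exact_mod_cast hdet
  have hcop : IsCoprime (qn : ℤ) pn := by
    rcases Nat.even_or_odd (n+1) with he | ho
    · rw [he.neg_one_pow] at hdetZ
      exact ⟨-a', b', by linarith⟩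
    · rw [ho.neg_one_pow] at hdetZ
      exact ⟨a', -b', by linarith⟩
  obtain ⟨c, hc⟩ : ∃ c : ℤ, c = (k * pn) % qn := ⟨_, rfl⟩
  rw [← hc]
  have hc0 : 0 ≤ c := hc ▸ Int.emod_nonneg _ (by exact_mod_cast (by omega : (qn:ℤ) ≠ 0))
  have hclt : c < qn := hc ▸ Int.emod_lt_of_pos _ (by exact_mod_cast (by omega : 0 < (qn:ℤ)))
  have hc1 : 1 ≤ c := by
    rcases eq_or_lt_of_le hc0 with h | h
    · exfalso
      have hdvd : (qn : ℤ) ∣ (k : ℤ) * pn := Int.dvd_of_emod_eq_zero (hc ▸ h.symm)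
      have : (qn : ℤ) ∣ (k : ℤ) := hcop.dvd_of_dvd_mul_right hdvd
      have := Int.le_of_dvd (by exact_mod_cast hk1) this
      omega
    · omega
  refine ⟨hc1, hclt, ?_⟩
  -- error term
  have hconv : (GenContFract.of v).convs n = (pn : ℝ) / qn := by
    rw [conv_eq_num_div_den, ← hp, ← hq]
  obtain ⟨ε, hε⟩ : ∃ ε : ℝ, ε = v - (pn : ℝ) / qn := ⟨_, rfl⟩
  have hεeq : v - (GenContFract.of v).convs n = ε := by rw [hconv, hε]
  have hmono : ((qn:ℝ)) ≤ (b' : ℝ) := by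
    rw [hq, ← hden1]; exact of_den_mono
  have hB' : (0:ℝ) < (b' : ℝ) := lt_of_lt_of_le hQ hmono
  have habs : |ε| ≤ 1 / ((qn:ℝ) * b') := by
    have := abs_sub_convs_le (v := v) (n := n) (cf_not_term v hv n)
    rwa [← hq, hden1, hεeq] at this
  -- sign of ε
  have hsne : IntFractPair.stream v (n+1) ≠ none := by
    intro h
    exact cf_not_term v hv n
      (of_terminatedAt_n_iff_succ_nth_intFractPair_stream_eq_none.2 h)
  obtain ⟨ifps, hifps⟩ := Option.ne_none_iff_exists'.1 hsne
  obtain ⟨ifp, hstream, hfr, -⟩ := IntFractPair.succ_nth_stream_eq_some_iff.1 hifps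
  have hsub := sub_convs_eq hstream
  simp only [hfr, if_false] at hsub
  have hBq : ((GenContFract.of v).contsAux (n+1)).b = (qn : ℝ) := by
    rw [hq, den_eq_conts_b, nth_cont_eq_succ_nth_contAux]
  have hpBnn : (0:ℝ) ≤ ((GenContFract.of v).contsAux n).b := zero_le_of_contsAux_b
  have hfrpos : 0 < ifp.fr := (IntFractPair.nth_stream_fr_nonneg hstream).lt_of_ne' hfr
  have hDpos : (0:ℝ) < ((GenContFract.of v).contsAux (n+1)).b *
      (ifp.fr⁻¹ * ((GenContFract.of v).contsAux (n+1)).b + ((GenContFract.of v).contsAux n).b) := by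
    rw [hBq]; positivity
  rw [hεeq] at hsub
  have hsign : (Even n → 0 < ε) ∧ (¬Even n → ε < 0) := by
    constructor
    · intro he; rw [hsub, he.neg_one_pow]; positivity
    · intro ho
      rw [hsub, (Nat.not_even_iff_odd.1 ho).neg_one_pow]
      exact div_neg_of_neg_of_pos (by norm_num) hDpos
  have hεne : ε ≠ 0 := by
    rcases Nat.even_or_odd n with he | ho
    · exact (hsign.1 he).ne'
    · exact (hsign.2 (Nat.not_even_iff_odd.2 ho)).ne
  -- bound k|ε| < 1/qn
  have hK1 : (1:ℝ) ≤ (k:ℝ) := by exact_mod_cast hk1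
  have hKQ : (k:ℝ) + 1 ≤ (qn:ℝ) := by exact_mod_cast (by omega : (k:ℕ) + 1 ≤ qn)
  have habs' : |ε| * ((qn:ℝ) * b') ≤ 1 := (le_div_iff₀ (by positivity)).1 habs
  have hepos : 0 < |ε| := abs_pos.2 hεne
  have hkabs : (k:ℝ) * |ε| * qn < 1 := by
    nlinarith [mul_le_mul_of_nonneg_left hmono (abs_nonneg ε)]
  have hke : (k:ℝ) * |ε| < 1 / qn := (lt_div_iff₀ hQ).2 hkabs
  clear hsub hDpos hBq hpBnn hfrpos hfr hstream hifps hsne hεeq hconv hnum1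
  clear hden1 ha' hb' hdet hdetZ hmono habs habs' hcop hkabs hB'
  -- fract computation
  obtain ⟨e, he⟩ : ∃ e : ℤ, e = (k : ℤ) * pn / qn := ⟨_, rfl⟩
  have hdm : (qn : ℝ) * (e : ℝ) + (c : ℝ) = (k:ℝ) * (pn:ℝ) := by
    rw [hc, he]
    exact_mod_cast congrArg (fun z : ℤ => (z : ℝ)) (Int.mul_ediv_add_emod ((k:ℤ) * pn) qn)
  have hkp : (k:ℝ) * (pn:ℝ) / qn = (e:ℝ) + (c:ℝ)/qn := by
    rw [← hdm]; field_simp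
  have hkv : (k:ℝ) * v = (e:ℝ) + ((c:ℝ)/qn + (k:ℝ) * ε) := by
    have hveq : v = (pn:ℝ)/qn + ε := by rw [hε]; ring
    calc (k:ℝ) * v = (k:ℝ) * (pn:ℝ)/qn + (k:ℝ)*ε := by rw [hveq]; ring
      _ = (e:ℝ) + ((c:ℝ)/qn + (k:ℝ) * ε) := by rw [hkp]; ring
  have hcR1 : (1:ℝ) ≤ (c:ℝ) := by exact_mod_cast hc1
  have hcRlt : (c:ℝ) ≤ (qn:ℝ) - 1 := by
    have : (c:ℝ) + 1 ≤ (qn:ℝ) := by exact_mod_cast (by omega : c + 1 ≤ (qn:ℤ))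
    linarith
  have hdivle : (1:ℝ)/qn ≤ (c:ℝ)/qn := by gcongr
  have hdivlt : (c:ℝ)/qn ≤ ((qn:ℝ)-1)/qn := by gcongr
  have hone : ((qn:ℝ)-1)/qn + 1/qn = 1 := by field_simp; ring
  have h0le : (0:ℝ) ≤ 1/qn := by positivity
  rcases Nat.even_or_odd n with hev | hod
  · have hεp := hsign.1 hev
    have hkep : 0 < (k:ℝ) * ε := mul_pos (by linarith) hεp
    have hub : (k:ℝ) * ε < 1/qn := by rw [abs_of_pos hεp] at hke; exact hke
    have hfract : Int.fract ((k:ℝ) * v) = (c:ℝ)/qn + (k:ℝ) * ε := by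
      rw [hkv, Int.fract_intCast_add, Int.fract_eq_self]
      refine ⟨by positivity, ?_⟩
      calc (c:ℝ)/qn + (k:ℝ)*ε < (c:ℝ)/qn + 1/qn := by linarith
        _ ≤ ((qn:ℝ)-1)/qn + 1/qn := by linarith
        _ = 1 := hone
    refine ⟨fun _ => ?_, fun h => absurd hev h⟩
    rw [hfract]
    refine ⟨by linarith, ?_⟩
    rw [add_div]
    linarith
  · have hnev : ¬ Even n := Nat.not_even_iff_odd.2 hod
    have hεn := hsign.2 hnev
    have hlb : -(1/(qn:ℝ)) < (k:ℝ) * ε := by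
      rw [abs_of_neg hεn] at hke
      have : (k:ℝ) * -ε < 1/qn := hke
      linarith
    have hkenn : (k:ℝ) * ε < 0 := mul_neg_of_pos_of_neg (by linarith) hεn
    have hfract : Int.fract ((k:ℝ) * v) = (c:ℝ)/qn + (k:ℝ) * ε := by
      rw [hkv, Int.fract_intCast_add, Int.fract_eq_self]
      constructor
      · linarith
      · have : (c:ℝ)/qn < 1 := by
          calc (c:ℝ)/qn ≤ ((qn:ℝ)-1)/qn := hdivlt
            _ < 1 := by rw [div_lt_one hQ]; linarith
        linarith
    refine ⟨fun h => absurd h hnev, fun _ => ?_⟩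
    rw [hfract]
    refine ⟨?_, by linarith⟩
    rw [sub_div]
    linarith



/- STATEMENT 0: If α, β ∈ (0,1) are irrational and their n-th continued fraction
convergents coincide (q_n^α = q_n^β =: q_n, p_n^α = p_n^β), then for every
k ∈ {1,...,q_n−1} there is c_k ∈ {0,...,q_n−1} with kα mod 1, kβ mod 1 ∈ (c_k/q_n,(c_k+1)/q_n). -/
theorem stmt0 (α β : ℝ) (hα : Irrational α) (hβ : Irrational β)
    (hα01 : α ∈ Set.Ioo (0:ℝ) 1) (hβ01 : β ∈ Set.Ioo (0:ℝ) 1)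
    (n : ℕ) (qn : ℕ) (pn : ℤ)
    (hqα : ((qn : ℝ)) = (GenContFract.of α).dens n)
    (hqβ : ((qn : ℝ)) = (GenContFract.of β).dens n)
    (hpα : ((pn : ℝ)) = (GenContFract.of α).nums n)
    (hpβ : ((pn : ℝ)) = (GenContFract.of β).nums n) :
    ∀ k : ℕ, 1 ≤ k → k < qn → ∃ c : ℕ, c < qn ∧
      Int.fract ((k : ℝ) * α) ∈ Set.Ioo ((c : ℝ) / qn) (((c : ℝ) + 1) / qn) ∧
      Int.fract ((k : ℝ) * β) ∈ Set.Ioo ((c : ℝ) / qn) (((c : ℝ) + 1) / qn) := by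
  intro k hk1 hk2
  obtain ⟨hc1, hclt, hαe, hαo⟩ := cf_key α hα n qn pn hqα hpα k hk1 hk2
  obtain ⟨-, -, hβe, hβo⟩ := cf_key β hβ n qn pn hqβ hpβ k hk1 hk2
  rcases Nat.even_or_odd n with hev | hod
  · refine ⟨((k : ℤ) * pn % qn).toNat, ?_, ?_, ?_⟩
    · omega
    · have hcast : ((((k : ℤ) * pn % qn).toNat : ℕ) : ℝ) = (((k : ℤ) * pn % qn : ℤ) : ℝ) := by
        exact_mod_cast congrArg (fun z : ℤ => (z : ℝ)) (Int.toNat_of_nonneg (by omega))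
      rw [hcast]; exact hαe hev
    · have hcast : ((((k : ℤ) * pn % qn).toNat : ℕ) : ℝ) = (((k : ℤ) * pn % qn : ℤ) : ℝ) := by
        exact_mod_cast congrArg (fun z : ℤ => (z : ℝ)) (Int.toNat_of_nonneg (by omega))
      rw [hcast]; exact hβe hev
  · have hnev : ¬ Even n := Nat.not_even_iff_odd.2 hod
    refine ⟨((k : ℤ) * pn % qn - 1).toNat, ?_, ?_, ?_⟩
    · omega
    all_goals {
      have hcast : ((((k : ℤ) * pn % qn - 1).toNat : ℕ) : ℝ)
          = (((k : ℤ) * pn % qn : ℤ) : ℝ) - 1 := by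
        exact_mod_cast congrArg (fun z : ℤ => (z : ℝ)) (Int.toNat_of_nonneg (by omega))
      rw [hcast, sub_add_cancel]
      first | exact hαo hnev | exact hβo hnev }
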